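/- Let (X,d) be a metric space and let (μₙ)_{n∈ℕ} be a sequentially tight sequence of Borel probability measures on X. Then (μₙ)_{n∈ℕ} is precompact in the topology of weak convergence, i.e. it admits a weakly convergent subsequence. -/

import Mathlib

open MeasureTheory Filter Topology Metric

open scoped ENNReal NNReal
open Set

lemma isComplete_of_closed_subset {X : Type*} [MetricSpace X] {L C : Set X}
    (hL : IsComplete L) (hC : IsClosed C) (h : C ⊆ L) : IsComplete C := by
  intro f hf hfC
  obtain ⟨x, _, hx⟩ := hL f hf (le_trans hfC (Filter.principal_mono.2 h))
  exact ⟨x, hC.closure_eq ▸ mem_closure_iff_clusterPt.2 (hf.1.mono (le_inf hx hfC)), hx⟩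

lemma liminf_subseq_ge {u : ℕ → ℝ≥0∞} {σ : ℕ → ℕ} (hσ : StrictMono σ) :
    Filter.liminf u Filter.atTop ≤ Filter.liminf (fun k => u (σ k)) Filter.atTop := by
  have h1 : Filter.map σ Filter.atTop ≤ Filter.atTop := hσ.tendsto_atTop
  calc Filter.liminf u Filter.atTop ≤ Filter.liminf u (Filter.map σ Filter.atTop) :=
        Filter.liminf_le_liminf_of_le h1
    _ = Filter.liminf (fun k => u (σ k)) Filter.atTop := by
        simp only [Filter.liminf, Filter.map_map]; rfl

lemma seq_tight_single_compact
    {X : Type*} [MetricSpace X] [MeasurableSpace X] [BorelSpace X]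
    (μ : ℕ → ProbabilityMeasure X)
    (htight : ∀ ε : ℝ, 0 < ε → ∃ K : ℝ → Set X,
      (∀ δ : ℝ, 0 < δ → IsCompact (K δ)) ∧
      (∀ δ : ℝ, 0 < δ →
        ENNReal.ofReal (1 - ε) ≤
          Filter.liminf (fun n => (μ n : Measure X) (Metric.thickening δ (K δ))) Filter.atTop) ∧
      IsComplete (closure (⋃ δ ∈ Set.Ioi (0 : ℝ), K δ)))
    {ε : ℝ} (hε0 : 0 < ε) (hε1 : ε < 1) :
    ∃ C : Set X, IsCompact C ∧ ∀ ρ : ℝ, 0 < ρ →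
      1 - ENNReal.ofReal ε ≤
        Filter.liminf (fun n => (μ n : Measure X) (Metric.thickening ρ C)) Filter.atTop := by
  -- scale sequence
  set d : ℕ → ℝ := fun j => (1/2 : ℝ) ^ j with hd
  have hdpos : ∀ j, 0 < d j := fun j => pow_pos (by norm_num) j
  have hdanti : ∀ {j j' : ℕ}, j ≤ j' → d j' ≤ d j := fun h =>
    pow_le_pow_of_le_one (by norm_num) (by norm_num) h
  -- family 0 for the Z-part
  obtain ⟨K0, hK0c, hK0m, hK0L⟩ := htight (ε/4) (by positivity)
  -- families for the W-part
  have hfam : ∀ j : ℕ, ∃ K : ℝ → Set X,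
      (∀ δ : ℝ, 0 < δ → IsCompact (K δ)) ∧
      (∀ δ : ℝ, 0 < δ → ENNReal.ofReal (1 - ε/2^(j+3)) ≤
        Filter.liminf (fun n => (μ n : Measure X) (Metric.thickening δ (K δ))) Filter.atTop) ∧
      IsComplete (closure (⋃ δ ∈ Set.Ioi (0 : ℝ), K δ)) := fun j => htight _ (by positivity)
  choose Kf hKfc hKfm _hKfL using hfam
  -- finite nets for the compacts Kf j (d j)
  have hnet : ∀ j : ℕ, ∃ t : Set X, t.Finite ∧
      Kf j (d j) ⊆ ⋃ y ∈ t, ball y (d j) := fun j =>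
    (Metric.totallyBounded_iff.1 ((hKfc j (d j) (hdpos j)).totallyBounded)) (d j) (hdpos j)
  choose F hFfin hFcov using hnet
  set W : ℕ → Set X := fun j => ⋃ y ∈ F j, closedBall y (2 * d j) with hWdef
  have hWclosed : ∀ j, IsClosed (W j) := fun j =>
    (hFfin j).isClosed_biUnion (fun _ _ => Metric.isClosed_closedBall)
  have hWsup : ∀ j, Metric.thickening (d j) (Kf j (d j)) ⊆ W j := by
    intro j x hx
    obtain ⟨z, hz, hdist⟩ := Metric.mem_thickening_iff.1 hx
    obtain ⟨y, hy, hzy⟩ := Set.mem_iUnion₂.1 (hFcov j hz)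
    exact Set.mem_iUnion₂.2 ⟨y, hy, by
      simp only [mem_closedBall, mem_ball] at *
      calc dist x y ≤ dist x z + dist z y := dist_triangle _ _ _
        _ ≤ 2 * d j := by linarith⟩
  -- the Z sets
  set A : ℕ → Set X := fun J => ⋃ t ∈ Set.Ioc (0:ℝ) (d J), K0 t with hA
  set Z : ℕ → Set X := fun J => closure (Metric.thickening (d J) (A J)) with hZ
  have hZanti : ∀ {J J' : ℕ}, J ≤ J' → Z J' ⊆ Z J := by
    intro J J' h
    apply closure_mono
    refine (Metric.thickening_subset_of_subset _ ?_).trans (Metric.thickening_mono (hdanti h) _)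
    refine Set.iUnion₂_subset fun t ht => Set.subset_iUnion₂_of_subset t ⟨ht.1, ht.2.trans (hdanti h)⟩ subset_rfl
  have hZsup : ∀ J, Metric.thickening (d J) (K0 (d J)) ⊆ Z J := by
    intro J
    refine (Metric.thickening_subset_of_subset _ ?_).trans subset_closure
    exact Set.subset_iUnion₂_of_subset (d J) ⟨hdpos J, le_refl _⟩ subset_rfl
  set L : Set X := closure (⋃ t ∈ Set.Ioi (0:ℝ), K0 t) with hLdef
  have hZL : ∀ J, ∀ x ∈ Z J, ∃ y ∈ L, dist x y < 2 * d J := by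
    intro J x hx
    obtain ⟨y, hy, hxy⟩ := Metric.mem_closure_iff.1 hx (d J) (hdpos J)
    obtain ⟨a, ha, hya⟩ := Metric.mem_thickening_iff.1 hy
    obtain ⟨t, ht, hat⟩ := Set.mem_iUnion₂.1 ha
    refine ⟨a, subset_closure (Set.mem_iUnion₂.2 ⟨t, ht.1, hat⟩), ?_⟩
    calc dist x a ≤ dist x y + dist y a := dist_triangle _ _ _
      _ < 2 * d J := by linarith
  -- the candidate compact set
  set T : Set X := (⋂ J, Z J) ∩ ⋂ j, W j with hT
  have hTclosed : IsClosed T :=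
    (isClosed_iInter fun _ => isClosed_closure).inter (isClosed_iInter hWclosed)
  have hTL : T ⊆ L := by
    intro x hx
    have hxZ : ∀ J, x ∈ Z J := fun J => Set.mem_iInter.1 hx.1 J
    have : x ∈ closure L := by
      rw [Metric.mem_closure_iff]
      intro r hr
      obtain ⟨J, hJ⟩ := exists_pow_lt_of_lt_one (show (0:ℝ) < r/2 by linarith) (by norm_num : (1/2:ℝ) < 1)
      obtain ⟨y, hy, hxy⟩ := hZL J x (hxZ J)
      exact ⟨y, hy, by simp only [hd] at hxy ⊢; nlinarith [hdpos J]⟩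
    rwa [closure_eq_iff_isClosed.2 isClosed_closure] at this
  have hTcompact : IsCompact T := by
    rw [isCompact_iff_totallyBounded_isComplete]
    constructor
    · rw [Metric.totallyBounded_iff]
      intro r hr
      obtain ⟨j, hj⟩ := exists_pow_lt_of_lt_one (show (0:ℝ) < r/2 by linarith) (by norm_num : (1/2:ℝ) < 1)
      refine ⟨F j, hFfin j, ?_⟩
      intro x hx
      have hxW : x ∈ W j := Set.mem_iInter.1 hx.2 j
      obtain ⟨y, hy, hxy⟩ := Set.mem_iUnion₂.1 hxW
      refine Set.mem_iUnion₂.2 ⟨y, hy, ?_⟩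
      simp only [mem_closedBall] at hxy
      simp only [mem_ball]
      have : d j < r/2 := hj
      calc dist x y ≤ 2 * d j := hxy
        _ < r := by linarith
    · exact isComplete_of_closed_subset hK0L hTclosed hTL
  refine ⟨T, hTcompact, ?_⟩

  -- transfer lemma: for each ρ > 0, some finite-stage set is inside thickening ρ T
  have htrans : ∀ ρ : ℝ, 0 < ρ → ∃ J : ℕ,
      (Z J ∩ ⋂ j ∈ Finset.range (J+1), W j) ⊆ Metric.thickening ρ T := by
    intro ρ hρ
    by_contra hcon
    push_neg at hcon
    have hx : ∀ J : ℕ, ∃ x, x ∈ (Z J ∩ ⋂ j ∈ Finset.range (J+1), W j) ∧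
        x ∉ Metric.thickening ρ T := fun J => Set.not_subset.1 (hcon J)
    choose x hxE hxT using hx
    have hx1 : ∀ J, x J ∈ Z J := fun J => (hxE J).1
    have hx2 : ∀ J j, j ≤ J → x J ∈ W j := by
      intro J j hj
      have := (hxE J).2
      rw [Set.mem_iInter₂] at this
      exact this j (Finset.mem_range.2 (Nat.lt_succ_of_le hj))
    have ha : ∀ J, ∃ y ∈ L, dist (x J) y < 2 * d J := fun J => hZL J _ (hx1 J)
    choose a haL had using ha
    -- range of a is totally bounded
    have hrtb : TotallyBounded (Set.range a) := by
      rw [Metric.totallyBounded_iff]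
      intro r hr
      obtain ⟨j, hj⟩ := exists_pow_lt_of_lt_one (show (0:ℝ) < r/4 by linarith)
        (by norm_num : (1/2:ℝ) < 1)
      refine ⟨F j ∪ (a '' Set.Iio j), (hFfin j).union ((Set.finite_Iio j).image a), ?_⟩
      rintro _ ⟨J, rfl⟩
      rcases lt_or_ge J j with hJ | hJ
      · exact Set.mem_iUnion₂.2 ⟨a J, Set.mem_union_right _ ⟨J, hJ, rfl⟩, mem_ball_self hr⟩
      · have hxW : x J ∈ W j := hx2 J j hJ
        obtain ⟨y, hy, hxy⟩ := Set.mem_iUnion₂.1 hxW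
        refine Set.mem_iUnion₂.2 ⟨y, Set.mem_union_left _ hy, ?_⟩
        simp only [mem_closedBall] at hxy
        have h1 : dist (a J) (x J) < 2 * d J := by rw [dist_comm]; exact had J
        have h2 : d J ≤ d j := hdanti hJ
        have h3 : d j < r / 4 := hj
        simp only [mem_ball]
        calc dist (a J) y ≤ dist (a J) (x J) + dist (x J) y := dist_triangle _ _ _
          _ < r := by linarith
    -- closure of range a is compact
    have hScompact : IsCompact (closure (Set.range a)) := by
      rw [isCompact_iff_totallyBounded_isComplete]
      exact ⟨hrtb.closure, isComplete_of_closed_subset hK0L isClosed_closure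
        (closure_minimal (Set.range_subset_iff.2 haL) isClosed_closure)⟩
    obtain ⟨ylim, hylimmem, σ, hσ, hconv⟩ :=
      hScompact.tendsto_subseq (fun J => subset_closure (Set.mem_range_self J))
    -- x ∘ σ also converges to ylim
    have hdist0 : Filter.Tendsto (fun i => dist (x (σ i)) ylim) Filter.atTop (𝓝 0) := by
      have hb1 : Filter.Tendsto (fun i => 2 * d (σ i) + dist (a (σ i)) ylim)
          Filter.atTop (𝓝 0) := by
        have t1 : Filter.Tendsto (fun i => d (σ i)) Filter.atTop (𝓝 0) :=
          (tendsto_pow_atTop_nhds_zero_of_lt_one (by norm_num) (by norm_num)).comp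
            hσ.tendsto_atTop
        have t2 : Filter.Tendsto (fun i => dist (a (σ i)) ylim) Filter.atTop (𝓝 0) :=
          tendsto_iff_dist_tendsto_zero.1 hconv
        have := (t1.const_mul 2).add t2
        simpa using this
      refine squeeze_zero (fun i => dist_nonneg) (fun i => ?_) hb1
      calc dist (x (σ i)) ylim ≤ dist (x (σ i)) (a (σ i)) + dist (a (σ i)) ylim :=
            dist_triangle _ _ _
        _ ≤ 2 * d (σ i) + dist (a (σ i)) ylim := by
            have := had (σ i); linarith
    have hxconv : Filter.Tendsto (fun i => x (σ i)) Filter.atTop (𝓝 ylim) :=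
      tendsto_iff_dist_tendsto_zero.2 hdist0
    have hylimT : ylim ∈ T := by
      constructor
      · rw [Set.mem_iInter]
        intro J
        refine isClosed_closure.mem_of_tendsto hxconv ?_
        filter_upwards [Filter.eventually_ge_atTop J] with i hi
        exact hZanti (hi.trans hσ.le_apply) (hx1 (σ i))
      · rw [Set.mem_iInter]
        intro j
        refine (hWclosed j).mem_of_tendsto hxconv ?_
        filter_upwards [Filter.eventually_ge_atTop j] with i hi
        exact hx2 (σ i) j (hi.trans hσ.le_apply)
    have : ∀ᶠ i in Filter.atTop, x (σ i) ∈ Metric.thickening ρ T := by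
      filter_upwards [hxconv (Metric.ball_mem_nhds ylim hρ)] with i hi
      exact Metric.mem_thickening_iff.2 ⟨ylim, hylimT, Metric.mem_ball.1 hi⟩
    obtain ⟨i, hi⟩ := this.exists
    exact hxT (σ i) hi
  -- now the liminf mass bound
  intro ρ hρ
  obtain ⟨J, hJ⟩ := htrans ρ hρ
  have h14 : (0:ℝ) < 1 - ε/4 := by linarith
  -- eventual mass of Z J
  have evZ : ∀ᶠ n in Filter.atTop,
      ENNReal.ofReal (1 - ε/2) < (μ n : Measure X) (Z J) := by
    apply Filter.eventually_lt_of_lt_liminf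
    refine lt_of_lt_of_le ?_ ((hK0m (d J) (hdpos J)).trans
      (Filter.liminf_le_liminf (Filter.Eventually.of_forall fun n => measure_mono (hZsup J))))
    · exact (ENNReal.ofReal_lt_ofReal_iff h14).2 (by linarith)
    · exact ⟨0, by simp⟩
  -- eventual mass of W j
  have evW : ∀ j : ℕ, ∀ᶠ n in Filter.atTop,
      ENNReal.ofReal (1 - ε/2^(j+2)) < (μ n : Measure X) (W j) := by
    intro j
    have h2j : (0:ℝ) < ε/2^(j+3) := by positivity
    have h2j' : ε/2^(j+3) < ε/2^(j+2) := by
      apply div_lt_div_of_pos_left hε0 (by positivity)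
      exact pow_lt_pow_right₀ (by norm_num) (by omega)
    have hpos : (0:ℝ) < 1 - ε/2^(j+3) := by
      have h8 : (8:ℝ) ≤ 2^(j+3) := by
        calc (8:ℝ) = 2^3 := by norm_num
          _ ≤ 2^(j+3) := pow_le_pow_right₀ (by norm_num) (by omega)
      have : ε/2^(j+3) ≤ ε/8 := by
        apply div_le_div_of_nonneg_left hε0.le (by norm_num) h8
      nlinarith
    apply Filter.eventually_lt_of_lt_liminf
    refine lt_of_lt_of_le ?_ ((hKfm j (d j) (hdpos j)).trans
      (Filter.liminf_le_liminf (Filter.Eventually.of_forall fun n => measure_mono (hWsup j))))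
    · exact (ENNReal.ofReal_lt_ofReal_iff hpos).2 (by linarith)
    · exact ⟨0, by simp⟩
  have evWall : ∀ᶠ n in Filter.atTop, ∀ j ∈ Finset.range (J+1),
      ENNReal.ofReal (1 - ε/2^(j+2)) < (μ n : Measure X) (W j) :=
    (Filter.eventually_all_finset _).2 (fun j _ => evW j)
  apply Filter.le_liminf_of_le
  · isBoundedDefault
  filter_upwards [evZ, evWall] with n hZn hWn
  -- measure of the complement of E := Z J ∩ ⋂ W j
  set E : Set X := Z J ∩ ⋂ j ∈ Finset.range (J+1), W j with hEdef
  have hEmeas : MeasurableSet E :=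
    (isClosed_closure.measurableSet).inter
      (MeasurableSet.biInter (Finset.range (J+1)).countable_toSet
        (fun j _ => (hWclosed j).measurableSet))
  have hcompl : (μ n : Measure X) Eᶜ ≤ ENNReal.ofReal ε := by
    have hsplit : Eᶜ = (Z J)ᶜ ∪ ⋃ j ∈ Finset.range (J+1), (W j)ᶜ := by
      rw [hEdef, Set.compl_inter, Set.compl_iInter₂]
    have hZc : (μ n : Measure X) (Z J)ᶜ ≤ ENNReal.ofReal (ε/2) := by
      rw [prob_compl_eq_one_sub isClosed_closure.measurableSet]
      calc (1 : ℝ≥0∞) - (μ n : Measure X) (Z J)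
          ≤ 1 - ENNReal.ofReal (1 - ε/2) := tsub_le_tsub_left hZn.le 1
        _ = ENNReal.ofReal (ε/2) := by
            rw [← ENNReal.ofReal_one, ← ENNReal.ofReal_sub _ (by linarith)]
            congr 1
            ring
    have hWc : ∀ j ∈ Finset.range (J+1),
        (μ n : Measure X) (W j)ᶜ ≤ ENNReal.ofReal (ε/2^(j+2)) := by
      intro j hj
      have h4 : (4:ℝ) ≤ 2^(j+2) := by
        calc (4:ℝ) = 2^2 := by norm_num
          _ ≤ 2^(j+2) := pow_le_pow_right₀ (by norm_num) (by omega)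
      have hq : ε/2^(j+2) ≤ ε/4 := div_le_div_of_nonneg_left hε0.le (by norm_num) h4
      rw [prob_compl_eq_one_sub (hWclosed j).measurableSet]
      calc (1 : ℝ≥0∞) - (μ n : Measure X) (W j)
          ≤ 1 - ENNReal.ofReal (1 - ε/2^(j+2)) := tsub_le_tsub_left (hWn j hj).le 1
        _ = ENNReal.ofReal (ε/2^(j+2)) := by
            rw [← ENNReal.ofReal_one, ← ENNReal.ofReal_sub _ (by linarith)]
            congr 1
            ring
    calc (μ n : Measure X) Eᶜ
        ≤ (μ n : Measure X) (Z J)ᶜ + (μ n : Measure X) (⋃ j ∈ Finset.range (J+1), (W j)ᶜ) := by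
          rw [hsplit]; exact measure_union_le _ _
      _ ≤ ENNReal.ofReal (ε/2) + ∑ j ∈ Finset.range (J+1), (μ n : Measure X) (W j)ᶜ :=
          add_le_add hZc (measure_biUnion_finset_le _ _)
      _ ≤ ENNReal.ofReal (ε/2) + ∑ j ∈ Finset.range (J+1), ENNReal.ofReal (ε/2^(j+2)) :=
          add_le_add le_rfl (Finset.sum_le_sum hWc)
      _ ≤ ENNReal.ofReal (ε/2) + ENNReal.ofReal (ε/2) := by
          apply add_le_add le_rfl
          rw [← ENNReal.ofReal_sum_of_nonneg (fun j _ => by positivity)]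
          apply ENNReal.ofReal_le_ofReal
          have : ∀ j ∈ Finset.range (J+1), ε/2^(j+2) = (ε/4) * (1/2)^j := by
            intro j _
            rw [div_pow, one_pow, pow_add]
            rw [div_mul_eq_mul_div, mul_one_div, div_div]
            congr 1
            ring
          rw [Finset.sum_congr rfl this, ← Finset.mul_sum]
          have := sum_geometric_two_le (J+1)
          nlinarith
      _ = ENNReal.ofReal ε := by
          rw [← ENNReal.ofReal_add (by linarith) (by linarith)]
          norm_num
  have hE : 1 - ENNReal.ofReal ε ≤ (μ n : Measure X) E := by
    have := prob_compl_eq_one_sub (μ := (μ n : Measure X)) hEmeas.compl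
    rw [compl_compl] at this
    rw [this]
    exact tsub_le_tsub_left hcompl 1
  exact hE.trans (measure_mono hJ)


/-- Let `(X,d)` be a metric space and `(μₙ)` a sequentially tight sequence of
Borel probability measures on `X`.  Then `(μₙ)` is precompact in the topology of weak
convergence: every subsequence admits a weakly convergent sub-subsequence. -/
theorem sequentially_tight_precompact
    {X : Type*} [MetricSpace X] [MeasurableSpace X] [BorelSpace X]
    (μ : ℕ → ProbabilityMeasure X)
    (htight : ∀ ε : ℝ, 0 < ε → ∃ K : ℝ → Set X,
      (∀ δ : ℝ, 0 < δ → IsCompact (K δ)) ∧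
      (∀ δ : ℝ, 0 < δ →
        ENNReal.ofReal (1 - ε) ≤
          Filter.liminf (fun n => (μ n : Measure X) (Metric.thickening δ (K δ))) Filter.atTop) ∧
      IsComplete (closure (⋃ δ ∈ Set.Ioi (0 : ℝ), K δ))) :
    ∀ φ : ℕ → ℕ, StrictMono φ →
      ∃ ψ : ℕ → ℕ, StrictMono ψ ∧ ∃ ν : ProbabilityMeasure X,
        Filter.Tendsto (fun j => μ (φ (ψ j))) Filter.atTop (𝓝 ν) := by
  classical
  intro φ hφ
  -- X is nonempty
  rcases isEmpty_or_nonempty X with hX | hX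
  · exfalso
    have h1 : (μ 0 : Measure X) Set.univ = 1 := measure_univ
    rw [Set.univ_eq_empty_iff.2 hX] at h1
    simp at h1
  -- single compacts from sequential tightness
  have hcomp : ∀ m : ℕ, ∃ C : Set X, IsCompact C ∧ ∀ ρ : ℝ, 0 < ρ →
      1 - ENNReal.ofReal (1/((m:ℝ)+2)) ≤
        Filter.liminf (fun n => (μ n : Measure X) (Metric.thickening ρ C)) Filter.atTop := by
    intro m
    refine seq_tight_single_compact μ htight (by positivity) ?_
    rw [div_lt_one (by positivity)]
    have : (0:ℝ) ≤ (m:ℝ) := Nat.cast_nonneg m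
    linarith
  choose C hCcomp hCmass using hcomp
  -- finite nets of the compacts C m at all scales
  have hnets : ∀ m j : ℕ, ∃ t : Set X, t.Finite ∧
      C m ⊆ ⋃ y ∈ t, ball y ((1/2:ℝ)^j) := fun m j =>
    (Metric.totallyBounded_iff.1 (hCcomp m).totallyBounded) _ (by positivity)
  choose G hGfin hGcov using hnets
  obtain ⟨x0⟩ := hX
  have hDcount : (insert x0 (⋃ m, ⋃ j, G m j)).Countable :=
    (Set.countable_iUnion fun m => Set.countable_iUnion fun j => (hGfin m j).countable).insert x0
  obtain ⟨f, hf⟩ : ∃ f : ℕ → X, insert x0 (⋃ m, ⋃ j, G m j) = Set.range f :=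
    hDcount.exists_eq_range (Set.insert_nonempty _ _)
  -- covering property of f
  have hcover : ∀ m : ℕ, ∀ r : ℝ, 0 < r → ∃ s : Finset ℕ,
      C m ⊆ ⋃ i ∈ s, ball (f i) r := by
    intro m r hr
    obtain ⟨j, hj⟩ := exists_pow_lt_of_lt_one hr (by norm_num : (1/2:ℝ) < 1)
    have hsub : G m j ⊆ Set.range f := by
      rw [← hf]
      exact fun y hy => Set.mem_insert_of_mem _
        (Set.mem_iUnion.2 ⟨m, Set.mem_iUnion.2 ⟨j, hy⟩⟩)
    haveI := (hGfin m j).fintype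
    have hchoice : ∀ y : G m j, ∃ i : ℕ, f i = (y : X) := fun y => hsub y.2
    choose idx hidx using hchoice
    refine ⟨Finset.univ.image idx, ?_⟩
    intro x hx
    obtain ⟨y, hy, hxy⟩ := Set.mem_iUnion₂.1 (hGcov m j hx)
    refine Set.mem_iUnion₂.2 ⟨idx ⟨y, hy⟩, Finset.mem_image_of_mem _ (Finset.mem_univ _), ?_⟩
    rw [mem_ball, hidx ⟨y, hy⟩]
    exact lt_trans (mem_ball.1 hxy) hj
  -- the countable class of finite unions of rational closed balls
  set Eset : Finset (ℕ × ℚ) → Set X := fun s => ⋃ p ∈ s, closedBall (f p.1) (p.2 : ℝ)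
    with hEset
  have hEclosed : ∀ s, IsClosed (Eset s) := fun s =>
    s.finite_toSet.isClosed_biUnion fun _ _ => Metric.isClosed_closedBall
  have hEmeas : ∀ s, MeasurableSet (Eset s) := fun s => (hEclosed s).measurableSet
  have hEunion : ∀ s t, Eset (s ∪ t) = Eset s ∪ Eset t := fun s t => by
    rw [hEset]
    simp only
    rw [Finset.set_biUnion_union]
  have hEempty : Eset ∅ = ∅ := by simp [hEset]
  -- extraction of a convergent sub-subsequence on all class sets
  obtain ⟨g, -, ψ, hψ, hg0⟩ :=
    (isCompact_univ (X := Finset (ℕ × ℚ) → ℝ≥0∞)).tendsto_subseq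
      (x := fun n (s : Finset (ℕ × ℚ)) => (μ (φ n) : Measure X) (Eset s))
      (fun n => Set.mem_univ _)
  have hg : ∀ s, Filter.Tendsto (fun k => (μ (φ (ψ k)) : Measure X) (Eset s))
      Filter.atTop (𝓝 (g s)) := fun s => (tendsto_pi_nhds.1 hg0) s
  have hgle1 : ∀ s, g s ≤ 1 := fun s =>
    le_of_tendsto (hg s) (Filter.Eventually.of_forall fun k => prob_le_one)
  have hgzero : ∀ s, Eset s = ∅ → g s = 0 := fun s hs =>
    tendsto_nhds_unique (hg s) (by simp only [hs, measure_empty]; exact tendsto_const_nhds)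
  have hgsub : ∀ s t, g (s ∪ t) ≤ g s + g t := fun s t =>
    le_of_tendsto_of_tendsto' (hg _) ((hg s).add (hg t)) fun k => by
      rw [hEunion]; exact measure_union_le _ _
  have hgadd : ∀ s t, Disjoint (Eset s) (Eset t) → g (s ∪ t) = g s + g t := by
    intro s t hd
    refine tendsto_nhds_unique (hg _) ?_
    have heq : (fun k => (μ (φ (ψ k)) : Measure X) (Eset (s ∪ t))) =
        fun k => (μ (φ (ψ k)) : Measure X) (Eset s) + (μ (φ (ψ k)) : Measure X) (Eset t) :=
      funext fun k => by rw [hEunion]; exact measure_union hd (hEmeas t)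
    rw [heq]
    exact (hg s).add (hg t)
  have hgsum : ∀ (N : Finset ℕ) (t : ℕ → Finset (ℕ × ℚ)),
      g (N.sup t) ≤ ∑ n ∈ N, g (t n) := by
    intro N t
    induction N using Finset.induction_on with
    | empty => simp only [Finset.sup_empty, Finset.sum_empty]
              ;exact le_of_eq (hgzero _ hEempty)
    | insert _ _ h ih =>
        rw [Finset.sup_insert, Finset.sum_insert h]
        exact (hgsub _ _).trans (add_le_add le_rfl ih)
  have hEsup : ∀ (N : Finset ℕ) (t : ℕ → Finset (ℕ × ℚ)),
      Eset (N.sup t) = ⋃ n ∈ N, Eset (t n) := by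
    intro N t
    induction N using Finset.induction_on with
    | empty => simp [hEempty]
    | insert _ _ h ih => rw [Finset.sup_insert, Finset.sup_eq_union, hEunion, ih, Finset.set_biUnion_insert]
  -- the limiting set function on opens
  set β : Set X → ℝ≥0∞ := fun Gs => ⨆ (s : Finset (ℕ × ℚ)) (_ : Eset s ⊆ Gs), g s with hβ
  have hβle1 : ∀ Gs, β Gs ≤ 1 := fun Gs => iSup₂_le fun s _ => hgle1 s
  have hgleβ : ∀ {s Gs}, Eset s ⊆ Gs → g s ≤ β Gs := fun {s Gs} hs =>
    le_iSup₂ (f := fun s (_ : Eset s ⊆ Gs) => g s) s hs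
  -- superadditivity of β on disjoint pairs
  have hβkey : ∀ {G1 G2 D : Set X}, Disjoint G1 G2 → G1 ⊆ D → G2 ⊆ D →
      β G1 + β G2 ≤ β D := by
    intro G1 G2 D hdisj h1 h2
    haveI hne1 : Nonempty {s : Finset (ℕ × ℚ) // Eset s ⊆ G1} :=
      ⟨⟨∅, by rw [hEempty]; exact Set.empty_subset _⟩⟩
    haveI hne2 : Nonempty {s : Finset (ℕ × ℚ) // Eset s ⊆ G2} :=
      ⟨⟨∅, by rw [hEempty]; exact Set.empty_subset _⟩⟩
    have e1 : β G1 = ⨆ p : {s : Finset (ℕ × ℚ) // Eset s ⊆ G1}, g ↑p := iSup_subtype'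
    have e2 : β G2 = ⨆ p : {s : Finset (ℕ × ℚ) // Eset s ⊆ G2}, g ↑p := iSup_subtype'
    rw [e1, e2, ENNReal.iSup_add]
    refine iSup_le fun p => ?_
    rw [ENNReal.add_iSup]
    refine iSup_le fun r => ?_
    have hdisj' : Disjoint (Eset p) (Eset r) := hdisj.mono p.2 r.2
    rw [← hgadd _ _ hdisj']
    exact hgleβ (by rw [hEunion]; exact Set.union_subset (p.2.trans h1) (r.2.trans h2))
  set m0 : Set X → ℝ≥0∞ := fun A => if IsOpen A then β A else ⊤ with hm0
  have hm0empty : m0 ∅ = 0 := by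
    rw [hm0]
    simp only [if_pos isOpen_empty]
    exact le_antisymm (iSup₂_le fun s hs =>
      le_of_eq (hgzero s (Set.subset_empty_iff.1 hs))) (zero_le)
  set νo := OuterMeasure.ofFunction m0 hm0empty with hνo
  have hνole : ∀ A : Set X, νo A ≤ m0 A := fun A => OuterMeasure.ofFunction_le A
  -- νo is a metric outer measure
  have hmetric : νo.IsMetric := by
    intro S T' hST
    refine le_antisymm (measure_union_le S T') ?_
    obtain ⟨r, hr0, hr⟩ := hST
    have hr'0 : min r 1 ≠ 0 := by
      simp only [ne_eq, min_eq_iff]  -- fallback below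
      intro h
      rcases h with ⟨h1, -⟩ | ⟨h1, -⟩
      · exact hr0 h1
      · exact one_ne_zero h1
    have hr'top : min r 1 ≠ ⊤ := (min_le_right _ _).trans_lt (by norm_num) |>.ne
    set c := (min r 1).toReal with hc
    have hcpos : 0 < c := ENNReal.toReal_pos hr'0 hr'top
    have hsep : ∀ x ∈ S, ∀ y ∈ T', c ≤ dist x y := by
      intro x hx y hy
      have h1 : min r 1 ≤ edist x y := le_trans (min_le_left _ _) (hr x hx y hy)
      calc c ≤ (edist x y).toReal := ENNReal.toReal_mono (edist_ne_top x y) h1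
        _ = dist x y := (edist_dist x y).symm ▸ (ENNReal.toReal_ofReal dist_nonneg)
    have hdisjU : Disjoint (Metric.thickening (c/3) S) (Metric.thickening (c/3) T') := by
      rw [Set.disjoint_left]
      intro z hz1 hz2
      obtain ⟨x, hx, hzx⟩ := Metric.mem_thickening_iff.1 hz1
      obtain ⟨y, hy, hzy⟩ := Metric.mem_thickening_iff.1 hz2
      have := hsep x hx y hy
      have : dist x y ≤ dist x z + dist z y := dist_triangle _ _ _
      rw [dist_comm z x] at hzx
      linarith [hsep x hx y hy]
    rw [hνo, OuterMeasure.ofFunction_apply]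
    refine le_iInf₂ fun Dn hD => ?_
    by_cases hop : ∀ n, IsOpen (Dn n)
    · have hb : ∀ (U : Set X) (hU : IsOpen U) (hSU : S ⊆ Metric.thickening (c/3) S),
        True := fun _ _ _ => trivial
      have hbound1 : νo S ≤ ∑' n, m0 (Dn n ∩ Metric.thickening (c/3) S) := by
        have hcov : S ⊆ ⋃ n, (Dn n ∩ Metric.thickening (c/3) S) := by
          intro x hx
          obtain ⟨n, hn⟩ := Set.mem_iUnion.1 (hD (Set.mem_union_left _ hx))
          exact Set.mem_iUnion.2 ⟨n, hn, Metric.self_subset_thickening (by positivity) _ hx⟩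
        calc νo S ≤ νo (⋃ n, (Dn n ∩ Metric.thickening (c/3) S)) := measure_mono hcov
          _ ≤ ∑' n, νo (Dn n ∩ Metric.thickening (c/3) S) := measure_iUnion_le _
          _ ≤ ∑' n, m0 (Dn n ∩ Metric.thickening (c/3) S) :=
              ENNReal.tsum_le_tsum fun n => hνole _
      have hbound2 : νo T' ≤ ∑' n, m0 (Dn n ∩ Metric.thickening (c/3) T') := by
        have hcov : T' ⊆ ⋃ n, (Dn n ∩ Metric.thickening (c/3) T') := by
          intro x hx
          obtain ⟨n, hn⟩ := Set.mem_iUnion.1 (hD (Set.mem_union_right _ hx))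
          exact Set.mem_iUnion.2 ⟨n, hn, Metric.self_subset_thickening (by positivity) _ hx⟩
        calc νo T' ≤ νo (⋃ n, (Dn n ∩ Metric.thickening (c/3) T')) := measure_mono hcov
          _ ≤ ∑' n, νo (Dn n ∩ Metric.thickening (c/3) T') := measure_iUnion_le _
          _ ≤ ∑' n, m0 (Dn n ∩ Metric.thickening (c/3) T') :=
              ENNReal.tsum_le_tsum fun n => hνole _
      calc νo S + νo T'
          ≤ (∑' n, m0 (Dn n ∩ Metric.thickening (c/3) S)) +
            ∑' n, m0 (Dn n ∩ Metric.thickening (c/3) T') := add_le_add hbound1 hbound2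
        _ = ∑' n, (m0 (Dn n ∩ Metric.thickening (c/3) S) +
              m0 (Dn n ∩ Metric.thickening (c/3) T')) := ENNReal.tsum_add.symm
        _ ≤ ∑' n, m0 (Dn n) := by
            refine ENNReal.tsum_le_tsum fun n => ?_
            rw [hm0]
            simp only [if_pos ((hop n).inter Metric.isOpen_thickening),
              if_pos (hop n)]
            exact hβkey (hdisjU.mono Set.inter_subset_right Set.inter_subset_right)
              Set.inter_subset_left Set.inter_subset_left
    · push_neg at hop
      obtain ⟨n, hn⟩ := hop
      have : m0 (Dn n) = ⊤ := by rw [hm0]; exact if_neg hn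
      exact le_top.trans (this ▸ ENNReal.le_tsum n)
  -- the Borel measure
  have hcar : (inferInstance : MeasurableSpace X) ≤ νo.caratheodory := by
    have : (inferInstance : MeasurableSpace X) = borel X := BorelSpace.measurable_eq
    rw [this]
    exact hmetric.borel_le_caratheodory
  set ν := νo.toMeasure hcar with hν
  have hν_apply : ∀ {s : Set X}, MeasurableSet s → ν s = νo s := fun hs =>
    MeasureTheory.toMeasure_apply _ hcar hs
  -- mass lower bound
  have hmass_ge : (1:ℝ≥0∞) ≤ νo Set.univ := by
    rw [hνo, OuterMeasure.ofFunction_apply]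
    refine le_iInf₂ fun Dn hD => ?_
    by_cases hop : ∀ n, IsOpen (Dn n)
    · have hkey : ∀ m : ℕ, 1 - ENNReal.ofReal (1/((m:ℝ)+2)) ≤ ∑' n, m0 (Dn n) := by
        intro m
        have hCsub : C m ⊆ ⋃ n, Dn n := (Set.subset_univ _).trans hD
        obtain ⟨δL, hδL0, hδL⟩ := lebesgue_number_lemma_of_metric (hCcomp m) hop hCsub
        obtain ⟨q, hq0, hqδ⟩ := exists_rat_btwn (show (0:ℝ) < δL/2 by linarith)
        obtain ⟨sF, hsF⟩ := hcover m ((q:ℝ)/2) (by positivity)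
        set sF' := sF.filter (fun i => ∃ x ∈ C m, dist x (f i) < (q:ℝ)/2) with hsF'
        have hwit : ∀ i ∈ sF', ∃ x ∈ C m, dist x (f i) < (q:ℝ)/2 :=
          fun i hi => (Finset.mem_filter.1 hi).2
        have hassign : ∀ i ∈ sF', ∃ n : ℕ, closedBall (f i) (q:ℝ) ⊆ Dn n := by
          intro i hi
          obtain ⟨x, hxC, hxd⟩ := hwit i hi
          obtain ⟨n, hn⟩ := hδL x hxC
          refine ⟨n, fun z hz => hn ?_⟩
          rw [mem_closedBall] at hz
          rw [mem_ball]
          have : dist (f i) x < (q:ℝ)/2 := by rw [dist_comm]; exact hxd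
          calc dist z x ≤ dist z (f i) + dist (f i) x := dist_triangle _ _ _
            _ < δL := by linarith
        choose! nfun hnfun using hassign
        set Nused := sF'.image nfun with hNused
        set tfun : ℕ → Finset (ℕ × ℚ) :=
          fun n => (sF'.filter (fun i => nfun i = n)).image (fun i => (i, q)) with htfun
        have hEt : ∀ n ∈ Nused, Eset (tfun n) ⊆ Dn n := by
          intro n hn z hz
          obtain ⟨p, hp, hzp⟩ := Set.mem_iUnion₂.1 hz
          obtain ⟨i, hi, rfl⟩ := Finset.mem_image.1 hp
          have hmem := Finset.mem_filter.1 hi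
          have := hnfun i hmem.1 hzp
          rwa [hmem.2] at this
        have hbig : Metric.thickening ((q:ℝ)/2) (C m) ⊆ ⋃ n ∈ Nused, Eset (tfun n) := by
          intro z hz
          obtain ⟨x, hxC, hzx⟩ := Metric.mem_thickening_iff.1 hz
          obtain ⟨i, hi, hxi⟩ := Set.mem_iUnion₂.1 (hsF hxC)
          rw [mem_ball] at hxi
          have hi' : i ∈ sF' := Finset.mem_filter.2 ⟨hi, ⟨x, hxC, hxi⟩⟩
          refine Set.mem_iUnion₂.2 ⟨nfun i, Finset.mem_image_of_mem _ hi', ?_⟩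
          refine Set.mem_iUnion₂.2 ⟨(i, q),
            Finset.mem_image_of_mem _ (Finset.mem_filter.2 ⟨hi', rfl⟩), ?_⟩
          rw [mem_closedBall]
          calc dist z (f i) ≤ dist z x + dist x (f i) := dist_triangle _ _ _
            _ ≤ (q:ℝ) := by linarith
        have hsubE : Metric.thickening ((q:ℝ)/2) (C m) ⊆ Eset (Nused.sup tfun) := by
          rw [hEsup]; exact hbig
        calc 1 - ENNReal.ofReal (1/((m:ℝ)+2))
            ≤ Filter.liminf (fun n => (μ n : Measure X)
                (Metric.thickening ((q:ℝ)/2) (C m))) Filter.atTop :=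
              hCmass m _ (by positivity)
          _ ≤ Filter.liminf (fun k => (μ (φ (ψ k)) : Measure X)
                (Metric.thickening ((q:ℝ)/2) (C m))) Filter.atTop :=
              liminf_subseq_ge (hφ.comp hψ)
          _ ≤ Filter.liminf (fun k => (μ (φ (ψ k)) : Measure X)
                (Eset (Nused.sup tfun))) Filter.atTop :=
              Filter.liminf_le_liminf
                (Filter.Eventually.of_forall fun k => measure_mono hsubE)
          _ = g (Nused.sup tfun) := (hg _).liminf_eq
          _ ≤ ∑ n ∈ Nused, g (tfun n) := hgsum _ _
          _ ≤ ∑ n ∈ Nused, m0 (Dn n) := by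
              refine Finset.sum_le_sum fun n hn => ?_
              rw [hm0]
              simp only [if_pos (hop n)]
              exact hgleβ (hEt n hn)
          _ ≤ ∑' n, m0 (Dn n) := ENNReal.sum_le_tsum _
      refine ENNReal.le_of_forall_pos_le_add fun η hη hfin => ?_
      obtain ⟨mn, hmn⟩ := exists_nat_one_div_lt (show (0:ℝ) < (η:ℝ) by exact_mod_cast hη)
      have hm2 : 1/((mn:ℝ)+2) < (η:ℝ) := by
        refine lt_trans ?_ hmn
        apply div_lt_div_of_pos_left one_pos (by positivity)
        linarith
      have h2 : (1:ℝ≥0∞) ≤ (∑' n, m0 (Dn n)) + ENNReal.ofReal (1/((mn:ℝ)+2)) :=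
        tsub_le_iff_right.1 (hkey mn)
      refine h2.trans (add_le_add le_rfl ?_)
      calc ENNReal.ofReal (1/((mn:ℝ)+2)) ≤ ENNReal.ofReal (η:ℝ) :=
            ENNReal.ofReal_le_ofReal hm2.le
        _ = (η : ℝ≥0∞) := ENNReal.ofReal_coe_nnreal
    · push_neg at hop
      obtain ⟨n, hn⟩ := hop
      have : m0 (Dn n) = ⊤ := by rw [hm0]; exact if_neg hn
      exact le_top.trans (this ▸ ENNReal.le_tsum n)
  have hν_univ : ν Set.univ = 1 := by
    rw [hν_apply MeasurableSet.univ]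
    refine le_antisymm ?_ hmass_ge
    refine (hνole _).trans ?_
    rw [hm0]
    simp only [if_pos isOpen_univ]
    exact hβle1 _
  haveI hPM : IsProbabilityMeasure ν := ⟨hν_univ⟩
  set P : ProbabilityMeasure X := ⟨ν, hPM⟩ with hP
  refine ⟨ψ, hψ, P, ?_⟩
  apply MeasureTheory.tendsto_of_forall_isOpen_le_liminf
  intro Gs hGs
  have hENN : ν Gs ≤ Filter.liminf (fun k => (μ (φ (ψ k)) : Measure X) Gs) Filter.atTop := by
    rw [hν_apply hGs.measurableSet]
    refine (hνole _).trans ?_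
    rw [hm0]
    simp only [if_pos hGs]
    refine iSup₂_le fun s hs => ?_
    calc g s = Filter.liminf (fun k => (μ (φ (ψ k)) : Measure X) (Eset s)) Filter.atTop :=
          (hg s).liminf_eq.symm
      _ ≤ Filter.liminf (fun k => (μ (φ (ψ k)) : Measure X) Gs) Filter.atTop :=
          Filter.liminf_le_liminf (Filter.Eventually.of_forall fun k => measure_mono hs)
  -- translate to ℝ≥0
  have aux : (ENNReal.ofNNReal (Filter.liminf (fun k => (μ (φ (ψ k))) Gs) Filter.atTop)) =
      Filter.liminf (fun k => ((μ (φ (ψ k)) : Measure X) Gs)) Filter.atTop := by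
    have := Monotone.map_liminf_of_continuousAt (F := Filter.atTop) ENNReal.coe_mono
      (fun k => (μ (φ (ψ k))) Gs) ENNReal.continuous_coe.continuousAt
      (Filter.IsBoundedUnder.isCoboundedUnder_ge ⟨1, by simp⟩) ⟨0, by simp⟩
    rw [this]
    congr 1
    funext k
    simp [ProbabilityMeasure.ennreal_coeFn_eq_coeFn_toMeasure]
  rw [← ENNReal.coe_le_coe, aux]
  calc (ENNReal.ofNNReal (P Gs))
      = ν Gs := ProbabilityMeasure.ennreal_coeFn_eq_coeFn_toMeasure P Gs
    _ ≤ _ := hENN
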